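/- Let k be a field, q ∈ k a primitive d-th root of unity (d ≥ 2), and n a positive integer with char k ∤ n and q^n = 1. Let A be the k-algebra with generators G, X and relations G^n = 1, X^d = 0, GX = q^{-1}XG (the extended Taft algebra). Then A has dimension nd over k, with basis {G^i X^j : 0 ≤ i ≤ n−1, 0 ≤ j ≤ d−1}. -/

import Mathlib

/-- The defining relations of the extended Taft algebra
`⟨G, X ∣ Gⁿ = 1, X^d = 0, GX = q⁻¹XG⟩`: the generator `true` plays the role of `G`
and `false` plays the role of `X`. -/
inductive TaftRel (k : Type*) [Field k] (q : k) (n d : ℕ) :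
    FreeAlgebra k Bool → FreeAlgebra k Bool → Prop
  | gpow : TaftRel k q n d ((FreeAlgebra.ι k true) ^ n) 1
  | xpow : TaftRel k q n d ((FreeAlgebra.ι k false) ^ d) 0
  | comm : TaftRel k q n d (FreeAlgebra.ι k true * FreeAlgebra.ι k false)
      (q⁻¹ • (FreeAlgebra.ι k false * FreeAlgebra.ι k true))

/-- The extended Taft algebra, as the quotient of the free algebra on `G, X` by the
two-sided ideal generated by `Gⁿ − 1`, `X^d`, `GX − q⁻¹XG`. -/
abbrev TaftAlg (k : Type*) [Field k] (q : k) (n d : ℕ) := RingQuot (TaftRel k q n d)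

/-- The image of the generator `G` in the extended Taft algebra. -/
noncomputable def taftG (k : Type*) [Field k] (q : k) (n d : ℕ) : TaftAlg k q n d :=
  RingQuot.mkAlgHom k (TaftRel k q n d) (FreeAlgebra.ι k true)

/-- The image of the generator `X` in the extended Taft algebra. -/
noncomputable def taftX (k : Type*) [Field k] (q : k) (n d : ℕ) : TaftAlg k q n d :=
  RingQuot.mkAlgHom k (TaftRel k q n d) (FreeAlgebra.ι k false)

open Fin.NatCast

section TaftAux

variable (k : Type*) [Field k] (q : k) (n d : ℕ) [NeZero n] [NeZero d]

/-- The model operator for `G` acting on `(Fin n × Fin d) → k`. -/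
noncomputable def taftGop : ((Fin n × Fin d) → k) →ₗ[k] ((Fin n × Fin d) → k) where
  toFun f p := f (p.1 - 1, p.2)
  map_add' _ _ := rfl
  map_smul' _ _ := rfl

/-- The model operator for `X` acting on `(Fin n × Fin d) → k`. -/
noncomputable def taftXop : ((Fin n × Fin d) → k) →ₗ[k] ((Fin n × Fin d) → k) where
  toFun f p := if (p.2 : ℕ) = 0 then 0 else q ^ (p.1 : ℕ) * f (p.1, p.2 - 1)
  map_add' f g := by
    funext p
    by_cases h : (p.2 : ℕ) = 0 <;> simp only [Pi.add_apply, h, if_true, if_false, ↓reduceIte, add_zero, mul_add, not_false_eq_true]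
  map_smul' c f := by
    funext p
    by_cases h : (p.2 : ℕ) = 0 <;> simp only [Pi.smul_apply, smul_eq_mul, RingHom.id_apply, h, if_true, if_false, ↓reduceIte, mul_zero, not_false_eq_true] <;> ring

lemma taftGop_apply (f : (Fin n × Fin d) → k) (p : Fin n × Fin d) :
    taftGop k n d f p = f (p.1 - 1, p.2) := rfl

lemma taftXop_apply (f : (Fin n × Fin d) → k) (p : Fin n × Fin d) :
    taftXop k q n d f p
      = if (p.2 : ℕ) = 0 then 0 else q ^ (p.1 : ℕ) * f (p.1, p.2 - 1) := rfl

lemma taftGop_pow (m : ℕ) (f : (Fin n × Fin d) → k) (p : Fin n × Fin d) :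
    (taftGop k n d ^ m) f p = f (p.1 - (m : Fin n), p.2) := by
  induction m generalizing f p with
  | zero => simp
  | succ m ih =>
      rw [pow_succ, Module.End.mul_apply, ih, taftGop_apply]
      rw [Nat.cast_add, Nat.cast_one, sub_sub]

lemma taftGop_pow_n : taftGop k n d ^ n = 1 := by
  refine LinearMap.ext fun f => funext fun p => ?_
  rw [taftGop_pow]
  simp

lemma taftXop_pow (m : ℕ) (f : (Fin n × Fin d) → k) (p : Fin n × Fin d) :
    (taftXop k q n d ^ m) f p =
      if (p.2 : ℕ) < m then 0 else q ^ ((p.1 : ℕ) * m) * f (p.1, p.2 - (m : Fin d)) := by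
  induction m generalizing f p with
  | zero => simp
  | succ m ih =>
      rw [pow_succ, Module.End.mul_apply, ih]
      by_cases h1 : (p.2 : ℕ) < m
      · rw [if_pos h1, if_pos (by omega)]
      · push_neg at h1
        have hmd : m < d := lt_of_le_of_lt h1 p.2.isLt
        have hm : ((m : Fin d) : ℕ) = m := by
          rw [Fin.val_natCast]; exact Nat.mod_eq_of_lt hmd
        have hle : (m : Fin d) ≤ p.2 := by rw [Fin.le_def, hm]; exact h1
        have hsub : Fin.val (p.2 - (m : Fin d)) = (p.2 : ℕ) - m := by
          rw [Fin.sub_val_of_le hle, hm]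
        rw [if_neg (not_lt.2 h1), taftXop_apply]
        dsimp only
        by_cases h2 : (p.2 : ℕ) = m
        · rw [if_pos (by omega : Fin.val (p.2 - (m : Fin d)) = 0),
            if_pos (by omega), mul_zero]
        · rw [if_neg (by omega : ¬ Fin.val (p.2 - (m : Fin d)) = 0),
            if_neg (by omega : ¬ (p.2 : ℕ) < m + 1)]
          have hc : p.2 - ((m + 1 : ℕ) : Fin d) = p.2 - (m : Fin d) - 1 := by
            rw [Nat.cast_add, Nat.cast_one, sub_sub]
          rw [hc, ← mul_assoc, ← pow_add, Nat.mul_succ]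

lemma taftXop_pow_d : taftXop k q n d ^ d = 0 := by
  refine LinearMap.ext fun f => funext fun p => ?_
  rw [taftXop_pow]
  simp [p.2.isLt]

/-- The representation of the free algebra on the model space. -/
noncomputable def taftF : FreeAlgebra k Bool →ₐ[k] Module.End k ((Fin n × Fin d) → k) :=
  FreeAlgebra.lift k (fun b => bif b then taftGop k n d else taftXop k q n d)

lemma taftF_true : taftF k q n d (FreeAlgebra.ι k true) = taftGop k n d := by
  simp [taftF]

lemma taftF_false : taftF k q n d (FreeAlgebra.ι k false) = taftXop k q n d := by
  simp [taftF]

lemma q_pow_mod (hqn : q ^ n = 1) (a : ℕ) : q ^ a = q ^ (a % n) := by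
  conv_lhs => rw [← Nat.div_add_mod a n, pow_add, pow_mul, hqn, one_pow, one_mul]

lemma taftGX (hqn : q ^ n = 1) (hq0 : q ≠ 0) :
    taftGop k n d * taftXop k q n d = q⁻¹ • (taftXop k q n d * taftGop k n d) := by
  refine LinearMap.ext fun f => funext fun p => ?_
  rw [Module.End.mul_apply, LinearMap.smul_apply, Module.End.mul_apply, Pi.smul_apply,
    taftGop_apply, taftXop_apply, taftXop_apply]
  have hgop : ∀ r : Fin n × Fin d, taftGop k n d f r = f (r.1 - 1, r.2) := fun r => rfl
  by_cases h : (p.2 : ℕ) = 0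
  · simp [h]
  · rw [if_neg h, if_neg h, hgop, smul_eq_mul]
    have key : q * q ^ ((p.1 - 1 : Fin n) : ℕ) = q ^ (p.1 : ℕ) := by
      have h1 : (p.1 : ℕ) = (((p.1 - 1) + 1 : Fin n) : ℕ) := by rw [sub_add_cancel]
      rw [h1, Fin.val_add, Fin.val_one', ← q_pow_mod k q n hqn, pow_add,
        ← q_pow_mod k q n hqn 1, pow_one, mul_comm]
    rw [← key]
    field_simp

end TaftAux

theorem stmt4 {k : Type*} [Field k] (q : k) (n d : ℕ) (hd : 2 ≤ d)
    (hq : IsPrimitiveRoot q d) (hn : 0 < n) (hchar : ¬ ringChar k ∣ n) (hqn : q ^ n = 1) :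
    Module.finrank k (TaftAlg k q n d) = n * d ∧
    ∃ b : Module.Basis (Fin n × Fin d) k (TaftAlg k q n d),
      ∀ p : Fin n × Fin d, b p = taftG k q n d ^ (p.1 : ℕ) * taftX k q n d ^ (p.2 : ℕ) := by
  haveI : NeZero n := ⟨hn.ne'⟩
  haveI : NeZero d := ⟨by omega⟩
  have hq0 : q ≠ 0 := by
    rintro rfl
    rw [zero_pow hn.ne'] at hqn
    exact zero_ne_one hqn
  -- the monomial family
  set v : Fin n × Fin d → TaftAlg k q n d :=
    fun p => taftG k q n d ^ (p.1 : ℕ) * taftX k q n d ^ (p.2 : ℕ) with hv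
  -- relations in the quotient
  have hGn : taftG k q n d ^ n = 1 := by
    have := RingQuot.mkAlgHom_rel k (TaftRel.gpow (k := k) (q := q) (n := n) (d := d))
    rwa [map_pow, map_one] at this
  have hXd : taftX k q n d ^ d = 0 := by
    have := RingQuot.mkAlgHom_rel k (TaftRel.xpow (k := k) (q := q) (n := n) (d := d))
    rwa [map_pow, map_zero] at this
  have hGX : taftG k q n d * taftX k q n d = q⁻¹ • (taftX k q n d * taftG k q n d) := by
    have := RingQuot.mkAlgHom_rel k (TaftRel.comm (k := k) (q := q) (n := n) (d := d))
    rwa [map_mul, map_smul, map_mul] at this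
  have hXG : taftX k q n d * taftG k q n d = q • (taftG k q n d * taftX k q n d) := by
    rw [hGX, smul_smul, mul_inv_cancel₀ hq0, one_smul]
  have hXGa : ∀ a : ℕ, taftX k q n d * taftG k q n d ^ a
      = q ^ a • (taftG k q n d ^ a * taftX k q n d) := by
    intro a
    induction a with
    | zero => simp
    | succ a ih =>
        rw [pow_succ, ← mul_assoc, ih, smul_mul_assoc, mul_assoc, hXG, mul_smul_comm,
          smul_smul, ← pow_succ, ← mul_assoc, ← pow_succ]
  have hXjGa : ∀ j a : ℕ, taftX k q n d ^ j * taftG k q n d ^ a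
      = q ^ (a * j) • (taftG k q n d ^ a * taftX k q n d ^ j) := by
    intro j a
    induction j with
    | zero => simp
    | succ j ih =>
        rw [pow_succ, mul_assoc, hXGa, mul_smul_comm, ← mul_assoc, ih, smul_mul_assoc,
          smul_smul, ← pow_add, mul_assoc, ← pow_succ,
          show a + a * j = a * (j + 1) from by ring]
  have hGmod : ∀ i : ℕ, taftG k q n d ^ i = taftG k q n d ^ (i % n) := by
    intro i
    conv_lhs => rw [← Nat.div_add_mod i n, pow_add, pow_mul, hGn, one_pow, one_mul]
  have hXbig : ∀ j : ℕ, d ≤ j → taftX k q n d ^ j = 0 := by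
    intro j hj
    rw [← Nat.add_sub_cancel' hj, pow_add, hXd, zero_mul]
  set S : Submodule k (TaftAlg k q n d) := Submodule.span k (Set.range v) with hS
  have hmono : ∀ i j : ℕ, taftG k q n d ^ i * taftX k q n d ^ j ∈ S := by
    intro i j
    by_cases hj : j < d
    · rw [hGmod i]
      refine Submodule.subset_span ⟨(⟨i % n, Nat.mod_lt _ hn⟩, ⟨j, hj⟩), rfl⟩
    · rw [hXbig j (le_of_not_gt hj), mul_zero]
      exact S.zero_mem
  have hmulv : ∀ p p' : Fin n × Fin d, v p * v p' ∈ S := by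
    intro p p'
    have : v p * v p' = q ^ ((p'.1 : ℕ) * (p.2 : ℕ)) •
        (taftG k q n d ^ ((p.1 : ℕ) + (p'.1 : ℕ)) * taftX k q n d ^ ((p.2 : ℕ) + (p'.2 : ℕ))) := by
      rw [hv]
      calc taftG k q n d ^ (p.1 : ℕ) * taftX k q n d ^ (p.2 : ℕ) *
            (taftG k q n d ^ (p'.1 : ℕ) * taftX k q n d ^ (p'.2 : ℕ))
          = taftG k q n d ^ (p.1 : ℕ) * (taftX k q n d ^ (p.2 : ℕ) * taftG k q n d ^ (p'.1 : ℕ))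
            * taftX k q n d ^ (p'.2 : ℕ) := by simp only [mul_assoc]
        _ = q ^ ((p'.1 : ℕ) * (p.2 : ℕ)) • (taftG k q n d ^ (p.1 : ℕ)
            * (taftG k q n d ^ (p'.1 : ℕ) * taftX k q n d ^ (p.2 : ℕ))
            * taftX k q n d ^ (p'.2 : ℕ)) := by rw [hXjGa, mul_smul_comm, smul_mul_assoc]
        _ = q ^ ((p'.1 : ℕ) * (p.2 : ℕ)) •
            (taftG k q n d ^ ((p.1 : ℕ) + (p'.1 : ℕ))
              * taftX k q n d ^ ((p.2 : ℕ) + (p'.2 : ℕ))) := by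
            rw [pow_add, pow_add]; simp only [mul_assoc]
    rw [this]
    exact S.smul_mem _ (hmono _ _)
  have hmulS : ∀ x ∈ S, ∀ y ∈ S, x * y ∈ S := by
    intro x hx y hy
    induction hx using Submodule.span_induction with
    | mem a ha =>
        induction hy using Submodule.span_induction with
        | mem b hb =>
            obtain ⟨p, rfl⟩ := ha
            obtain ⟨p', rfl⟩ := hb
            exact hmulv p p'
        | zero => rw [mul_zero]; exact S.zero_mem
        | add b c _ _ hb hc => rw [mul_add]; exact S.add_mem hb hc
        | smul c b _ hb => rw [mul_smul_comm]; exact S.smul_mem c hb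
    | zero => rw [zero_mul]; exact S.zero_mem
    | add a b _ _ ha' hb' => rw [add_mul]; exact S.add_mem ha' hb'
    | smul c a _ ha' => rw [smul_mul_assoc]; exact S.smul_mem c ha'
  have hspan : S = ⊤ := by
    rw [eq_top_iff]
    rintro z -
    obtain ⟨y, rfl⟩ := RingQuot.mkAlgHom_surjective k (TaftRel k q n d) z
    induction y using FreeAlgebra.induction with
    | grade0 r =>
        rw [AlgHom.commutes, Algebra.algebraMap_eq_smul_one]
        have h1 : (1 : TaftAlg k q n d) ∈ S := by simpa using hmono 0 0
        exact S.smul_mem r h1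
    | grade1 b =>
        cases b
        · exact (by simpa using hmono 0 1 : taftX k q n d ∈ S)
        · exact (by simpa using hmono 1 0 : taftG k q n d ∈ S)
    | mul a b ha hb => rw [map_mul]; exact hmulS _ ha _ hb
    | add a b ha hb => rw [map_add]; exact S.add_mem ha hb
  -- linear independence via the model representation
  have hrel : ∀ ⦃x y⦄, TaftRel k q n d x y → taftF k q n d x = taftF k q n d y := by
    rintro x y ⟨⟩
    · rw [map_pow, map_one, taftF_true, taftGop_pow_n]
    · rw [map_pow, map_zero, taftF_false, taftXop_pow_d]
    · rw [map_mul, map_smul, map_mul, taftF_true, taftF_false]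
      exact taftGX k q n d hqn hq0
  set φ : TaftAlg k q n d →ₐ[k] Module.End k ((Fin n × Fin d) → k) :=
    RingQuot.liftAlgHom k ⟨taftF k q n d, hrel⟩ with hφ
  set e0 : (Fin n × Fin d) → k := Pi.single ((0 : Fin n), (0 : Fin d)) 1 with he0
  set ψ : TaftAlg k q n d →ₗ[k] ((Fin n × Fin d) → k) :=
    { toFun := fun a => φ a e0
      map_add' := fun a b => by rw [map_add]; rfl
      map_smul' := fun c a => by rw [map_smul]; rfl } with hψ
  have hψv : ∀ p : Fin n × Fin d, ψ (v p) = Pi.single p 1 := by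
    intro p
    have hφv : φ (v p) = taftGop k n d ^ (p.1 : ℕ) * taftXop k q n d ^ (p.2 : ℕ) := by
      rw [hv, hφ]
      simp only [map_mul, map_pow]
      rw [show taftG k q n d = RingQuot.mkAlgHom k (TaftRel k q n d) (FreeAlgebra.ι k true)
          from rfl,
        show taftX k q n d = RingQuot.mkAlgHom k (TaftRel k q n d) (FreeAlgebra.ι k false)
          from rfl,
        RingQuot.liftAlgHom_mkAlgHom_apply, RingQuot.liftAlgHom_mkAlgHom_apply,
        taftF_true, taftF_false]
    show φ (v p) e0 = _
    rw [hφv]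
    funext r
    rw [Module.End.mul_apply, taftGop_pow, taftXop_pow]
    dsimp only
    have hc1 : (((p.1 : ℕ) : Fin n)) = p.1 := Fin.cast_val_eq_self p.1
    have hc2 : (((p.2 : ℕ) : Fin d)) = p.2 := Fin.cast_val_eq_self p.2
    rw [hc1, hc2]
    by_cases hr : r = p
    · subst hr
      rw [if_neg (lt_irrefl _), sub_self, sub_self, he0, Pi.single_eq_same,
        Pi.single_eq_same]
      simp
    · rw [Pi.single_apply, if_neg hr]
      by_cases h1 : (r.2 : ℕ) < (p.2 : ℕ)
      · rw [if_pos h1]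
      · rw [if_neg h1]
        have : e0 (r.1 - p.1, r.2 - p.2) = 0 := by
          rw [he0, Pi.single_apply, if_neg]
          intro hcontra
          apply hr
          have h1' : r.1 - p.1 = 0 := congrArg Prod.fst hcontra
          have h2' : r.2 - p.2 = 0 := congrArg Prod.snd hcontra
          have : r.1 = p.1 := by rwa [sub_eq_zero] at h1'
          have h2'' : r.2 = p.2 := by rwa [sub_eq_zero] at h2'
          exact Prod.ext this h2''
        rw [this, mul_zero]
  have hli : LinearIndependent k v := by
    apply LinearIndependent.of_comp ψ
    have : ψ ∘ v = fun p => Pi.single p 1 := by funext p; exact hψv p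
    rw [this]
    have := (Pi.basisFun k (Fin n × Fin d)).linearIndependent
    convert this using 1
    funext p
    rw [Pi.basisFun_apply]
  have hsp : ⊤ ≤ Submodule.span k (Set.range v) := by rw [← hS, hspan]
  let b : Module.Basis (Fin n × Fin d) k (TaftAlg k q n d) := Module.Basis.mk hli hsp
  have hb : ∀ p, b p = v p := fun p => Module.Basis.mk_apply hli hsp p
  constructor
  · rw [Module.finrank_eq_card_basis b, Fintype.card_prod, Fintype.card_fin, Fintype.card_fin]
  · exact ⟨b, fun p => hb p⟩
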